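/- Let p, q be distinct monic irreducible polynomials over a field F, and let J(p, m) and J(q, n) be generalized Jordan blocks (block matrices with m, resp. n, diagonal blocks equal to the companion matrix of p, resp. q, and identity blocks on the superdiagonal). Then the only matrix Δ satisfying Δ J(q, m) = J(p, n) Δ is Δ = 0. -/

import Mathlib

open Matrix Kronecker

/-- The `k×k` nilpotent Jordan block (upper shift matrix). -/
def jordanShift (F : Type*) [Semiring F] (k : ℕ) : Matrix (Fin k) (Fin k) F :=
  fun i j => if (j : ℕ) = (i : ℕ) + 1 then 1 else 0

/-- The companion matrix of a monic polynomial `p` (1's on the subdiagonal,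
last column `(-a_0, ..., -a_{d-1})ᵀ`). -/
def companionMatrix {F : Type*} [Field F] (p : Polynomial F) :
    Matrix (Fin p.natDegree) (Fin p.natDegree) F :=
  fun i j => (if (i : ℕ) = (j : ℕ) + 1 then 1 else 0)
    + (if (j : ℕ) = p.natDegree - 1 then -p.coeff (i : ℕ) else 0)

/-- The generalized Jordan block `J(p, n) = id_n ⊗ x_p + N_n ⊗ id_d`. -/
noncomputable def genJordan {F : Type*} [Field F] (p : Polynomial F) (n : ℕ) :
    Matrix (Fin n × Fin p.natDegree) (Fin n × Fin p.natDegree) F :=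
  (1 : Matrix (Fin n) (Fin n) F) ⊗ₖ companionMatrix p
    + jordanShift F n ⊗ₖ (1 : Matrix (Fin p.natDegree) (Fin p.natDegree) F)

section Helpers

open Polynomial

variable {F : Type*} [CommSemiring F] {R : Type*} [Ring R] [Algebra F R]

lemma commute_aeval_of_commute {r x : R} (h : Commute r x) (f : F[X]) :
    Commute r (aeval x f) := by
  induction f using Polynomial.induction_on' with
  | add p q hp hq => simpa [map_add] using hp.add_right hq
  | monomial k a =>
    rw [aeval_monomial]
    have h1 : Commute r ((algebraMap F R) a) := (Algebra.commutes a r).symm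
    exact h1.mul_right (h.pow_right k)

lemma exists_pow_add_commute (u v : R) (h : Commute u v) (k : ℕ) :
    ∃ c : R, (u + v) ^ k = u ^ k + v * c ∧ Commute u c ∧ Commute v c := by
  induction k with
  | zero => exact ⟨0, by simp⟩
  | succ k ih =>
    obtain ⟨c, hc, hu, hv⟩ := ih
    refine ⟨u ^ k + c * u + c * v, ?_, ?_, ?_⟩
    · have huk : u ^ k * v = v * u ^ k := ((h.symm).pow_right k).eq.symm
      rw [pow_succ, hc, add_mul, mul_add, mul_add, pow_succ, huk,
        mul_add, mul_add, ← mul_assoc, ← mul_assoc]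
      abel
    · exact (((Commute.refl u).pow_right k).add_right
        ((hu.mul_right (Commute.refl u)))).add_right (hu.mul_right h)
    · exact (((h.symm).pow_right k).add_right
        ((hv.mul_right h.symm))).add_right (hv.mul_right (Commute.refl v))

lemma exists_aeval_add_commute (u v : R) (h : Commute u v) (f : F[X]) :
    ∃ c : R, aeval (u + v) f = aeval u f + v * c ∧ Commute u c ∧ Commute v c := by
  induction f using Polynomial.induction_on' with
  | add p q hp hq =>
    obtain ⟨c₁, e₁, hu₁, hv₁⟩ := hp
    obtain ⟨c₂, e₂, hu₂, hv₂⟩ := hq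
    refine ⟨c₁ + c₂, ?_, hu₁.add_right hu₂, hv₁.add_right hv₂⟩
    rw [map_add, map_add, e₁, e₂, mul_add]; abel
  | monomial k a =>
    obtain ⟨c, hc, hu, hv⟩ := exists_pow_add_commute u v h k
    refine ⟨algebraMap F R a * c, ?_, ?_, ?_⟩
    · rw [aeval_monomial, aeval_monomial, hc, mul_add, ← mul_assoc,
        Algebra.commutes a v, mul_assoc]
    · have h1 : Commute u ((algebraMap F R) a) := (Algebra.commutes a u).symm
      exact h1.mul_right hu
    · have h1 : Commute v ((algebraMap F R) a) := (Algebra.commutes a v).symm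
      exact h1.mul_right hv

end Helpers

section Kron

variable (F : Type*) [CommSemiring F] (n d : ℕ)

/-- `X ↦ 1 ⊗ₖ X` as an algebra homomorphism. -/
noncomputable def kronAlgHom :
    Matrix (Fin d) (Fin d) F →ₐ[F] Matrix (Fin n × Fin d) (Fin n × Fin d) F where
  toFun X := (1 : Matrix (Fin n) (Fin n) F) ⊗ₖ X
  map_one' := Matrix.one_kronecker_one
  map_mul' X Y := by
    rw [← Matrix.mul_kronecker_mul, one_mul]
  map_zero' := Matrix.kronecker_zero _
  map_add' X Y := Matrix.kronecker_add _ _ _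
  commutes' r := by
    show (1 : Matrix (Fin n) (Fin n) F) ⊗ₖ (algebraMap F (Matrix (Fin d) (Fin d) F) r) = _
    rw [Algebra.algebraMap_eq_smul_one, Algebra.algebraMap_eq_smul_one,
      Matrix.kronecker_smul, Matrix.one_kronecker_one]

end Kron

section CompanionFacts

open Polynomial

variable {F : Type*} [Field F]

lemma companion_mulVec_single (p : Polynomial F) (j : Fin p.natDegree)
    (hj : (j : ℕ) + 1 < p.natDegree) :
    companionMatrix p *ᵥ Pi.single j 1 = Pi.single (⟨(j : ℕ) + 1, hj⟩ : Fin p.natDegree) 1 := by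
  funext i
  simp only [Matrix.mulVec_single_one, Matrix.col_apply, companionMatrix, mul_one]
  have hj' : (j : ℕ) ≠ p.natDegree - 1 := by omega
  rw [if_neg hj', add_zero, Pi.single_apply]
  rcases eq_or_ne (i : ℕ) ((j : ℕ) + 1) with hij | hij
  · rw [if_pos hij, if_pos (Fin.val_injective hij)]
  · rw [if_neg hij, if_neg (fun hh => hij (congrArg Fin.val hh))]

lemma companion_mulVec_single_last (p : Polynomial F) (hd : 0 < p.natDegree) :
    companionMatrix p *ᵥ Pi.single (⟨p.natDegree - 1, by omega⟩ : Fin p.natDegree) 1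
      = fun i : Fin p.natDegree => -p.coeff (i : ℕ) := by
  funext i
  simp only [Matrix.mulVec_single_one, Matrix.col_apply, companionMatrix, mul_one]
  rw [if_neg (by omega : ¬ (i : ℕ) = (p.natDegree - 1) + 1)]
  simp

lemma companion_pow_mulVec (p : Polynomial F) (hd : 0 < p.natDegree) (k : ℕ)
    (hk : k < p.natDegree) :
    (companionMatrix p) ^ k *ᵥ Pi.single (⟨0, hd⟩ : Fin p.natDegree) 1
      = Pi.single (⟨k, hk⟩ : Fin p.natDegree) 1 := by
  induction k with
  | zero => rw [pow_zero, Matrix.one_mulVec]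
  | succ k ih =>
    have hk' : k < p.natDegree := by omega
    rw [pow_succ', ← Matrix.mulVec_mulVec, ih hk',
      companion_mulVec_single p ⟨k, hk'⟩ hk]

lemma sum_mulVec' {ι : Type*} (s : Finset ι) {d : ℕ}
    (f : ι → Matrix (Fin d) (Fin d) F) (v : Fin d → F) :
    (∑ k ∈ s, f k) *ᵥ v = ∑ k ∈ s, f k *ᵥ v := by
  classical
  induction s using Finset.induction_on with
  | empty => simp
  | insert _ _ h ih => rw [Finset.sum_insert h, Finset.sum_insert h, Matrix.add_mulVec, ih]

lemma aeval_companion (p : Polynomial F) (hp : p.Monic) :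
    aeval (companionMatrix p) p = 0 := by
  rcases Nat.eq_zero_or_pos p.natDegree with hd | hd
  · have : Subsingleton (Matrix (Fin p.natDegree) (Fin p.natDegree) F) := by
      rw [hd]; infer_instance
    exact Subsingleton.elim _ _
  set x := companionMatrix p with hx
  have key : aeval x p *ᵥ Pi.single (⟨0, hd⟩ : Fin p.natDegree) 1 = 0 := by
    have expand : aeval x p
        = x ^ p.natDegree + ∑ k ∈ Finset.range p.natDegree, p.coeff k • x ^ k := by
      rw [aeval_eq_sum_range, Finset.sum_range_succ, hp.coeff_natDegree, one_smul, add_comm]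
    have hxd : x ^ p.natDegree *ᵥ Pi.single (⟨0, hd⟩ : Fin p.natDegree) 1
        = fun i : Fin p.natDegree => -p.coeff (i : ℕ) := by
      have hsplit : x ^ p.natDegree = x * x ^ (p.natDegree - 1) := by
        rw [← pow_succ', Nat.sub_add_cancel hd]
      rw [hsplit, ← Matrix.mulVec_mulVec,
        companion_pow_mulVec p hd (p.natDegree - 1) (by omega),
        companion_mulVec_single_last p hd]
    rw [expand, Matrix.add_mulVec, hxd, sum_mulVec']
    funext i
    have hsum : ∀ k ∈ Finset.range p.natDegree,
        ((p.coeff k • x ^ k) *ᵥ Pi.single (⟨0, hd⟩ : Fin p.natDegree) 1) i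
          = if k = (i : ℕ) then p.coeff (i : ℕ) else 0 := by
      intro k hk
      rw [Finset.mem_range] at hk
      rw [Matrix.smul_mulVec, companion_pow_mulVec p hd k hk]
      simp only [Pi.smul_apply, Pi.single_apply, smul_eq_mul]
      rcases eq_or_ne k (i : ℕ) with h | h
      · rw [if_pos h, if_pos (Fin.val_injective (show (i : ℕ) = k from h.symm)), mul_one, h]
      · rw [if_neg h, if_neg (fun hh => h ((congrArg Fin.val hh).symm)), mul_zero]
    rw [Pi.add_apply, Finset.sum_apply, Finset.sum_congr rfl hsum,
      Finset.sum_ite_eq' (Finset.range p.natDegree) (i : ℕ) (fun _ => p.coeff (i : ℕ)),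
      if_pos (Finset.mem_range.mpr i.isLt)]
    simp
  have cols : ∀ j : Fin p.natDegree, aeval x p *ᵥ Pi.single j 1 = 0 := by
    intro j
    have hj : (j : ℕ) < p.natDegree := j.isLt
    have hsingle : (Pi.single j 1 : Fin p.natDegree → F)
        = x ^ (j : ℕ) *ᵥ Pi.single (⟨0, hd⟩ : Fin p.natDegree) 1 := by
      rw [companion_pow_mulVec p hd (j : ℕ) hj]
    rw [hsingle, Matrix.mulVec_mulVec,
      (commute_aeval_of_commute ((Commute.refl x).pow_left (j : ℕ)) p).symm.eq,
      ← Matrix.mulVec_mulVec, key, Matrix.mulVec_zero]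
  ext i j
  simpa using congrFun (cols j) i

lemma isUnit_aeval_companion {p q : Polynomial F} (hpm : p.Monic) (hqm : q.Monic)
    (hpi : Irreducible p) (hqi : Irreducible q) (hne : p ≠ q) :
    IsUnit (aeval (companionMatrix p) q) := by
  have hdvd : ¬ p ∣ q := by
    intro hdvd
    obtain ⟨c, hc⟩ := hdvd
    rcases hqi.isUnit_or_isUnit hc with hu | hu
    · exact hpi.not_isUnit hu
    · exact hne (eq_of_monic_of_associated hpm hqm ⟨hu.unit, by simp [hc]⟩)
  obtain ⟨a, b, hab⟩ := hpi.coprime_iff_not_dvd.mpr hdvd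
  have := congrArg (aeval (companionMatrix p)) hab
  rw [map_add, _root_.map_mul, _root_.map_mul, aeval_companion p hpm, mul_zero, zero_add, _root_.map_one] at this
  have h2 : aeval (companionMatrix p) q * aeval (companionMatrix p) b = 1 := by
    rw [← _root_.map_mul, mul_comm q b, _root_.map_mul]; exact this
  exact ⟨⟨_, _, h2, this⟩, rfl⟩

end CompanionFacts

section Shift

variable {F : Type*} [Field F]

lemma jordanShift_pow_ne_zero (m k : ℕ) (i j : Fin m)
    (h : ((jordanShift F m) ^ k) i j ≠ 0) : (i : ℕ) + k ≤ (j : ℕ) := by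
  induction k generalizing i j with
  | zero =>
    rw [pow_zero] at h
    rcases eq_or_ne i j with rfl | hne
    · omega
    · exact absurd (Matrix.one_apply_ne hne) h
  | succ k ih =>
    rw [pow_succ, Matrix.mul_apply] at h
    obtain ⟨l, _, hl⟩ := Finset.exists_ne_zero_of_sum_ne_zero h
    have h1 : ((jordanShift F m) ^ k) i l ≠ 0 := fun hh => hl (by rw [hh, zero_mul])
    have h2 : jordanShift F m l j ≠ 0 := fun hh => hl (by rw [hh, mul_zero])
    have hjl : (j : ℕ) = (l : ℕ) + 1 := by
      by_contra hc
      exact h2 (if_neg hc)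
    have := ih i l h1
    omega

lemma jordanShift_pow_self (m : ℕ) : (jordanShift F m) ^ m = 0 := by
  ext i j
  by_contra h
  have := jordanShift_pow_ne_zero m m i j (by simpa using h)
  omega

lemma shift_kron_pow (m d k : ℕ) :
    ((jordanShift F m) ⊗ₖ (1 : Matrix (Fin d) (Fin d) F)) ^ k
      = ((jordanShift F m) ^ k) ⊗ₖ (1 : Matrix (Fin d) (Fin d) F) := by
  induction k with
  | zero => simp [Matrix.one_kronecker_one]
  | succ k ih => rw [pow_succ, ih, ← Matrix.mul_kronecker_mul, one_mul, pow_succ]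

end Shift

open Polynomial in
/-- If `p ≠ q` are distinct monic irreducible polynomials, the only intertwiner
between the generalized Jordan blocks `J(q, m)` and `J(p, n)` is zero. -/
theorem genJordan_intertwiner_eq_zero_of_ne {F : Type*} [Field F]
    (p q : Polynomial F) (hpm : p.Monic) (hqm : q.Monic)
    (hpi : Irreducible p) (hqi : Irreducible q) (hne : p ≠ q) (m n : ℕ)
    (Δ : Matrix (Fin n × Fin p.natDegree) (Fin m × Fin q.natDegree) F)
    (h : Δ * genJordan q m = genJordan p n * Δ) :
    Δ = 0 := by
  classical
  set Jq := genJordan q m with hJq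
  set Jp := genJordan p n with hJp
  -- intertwining extends to polynomials
  have hpow : ∀ k : ℕ, Δ * Jq ^ k = Jp ^ k * Δ := by
    intro k
    induction k with
    | zero => simp
    | succ k ih => rw [pow_succ, ← Matrix.mul_assoc, ih, Matrix.mul_assoc, h,
        ← Matrix.mul_assoc, ← pow_succ]
  have hint : ∀ f : Polynomial F, Δ * aeval Jq f = aeval Jp f * Δ := by
    intro f
    induction f using Polynomial.induction_on' with
    | add f g hf hg => rw [map_add, map_add, Matrix.mul_add, Matrix.add_mul, hf, hg]
    | monomial k a =>
      rw [aeval_monomial, aeval_monomial, Algebra.algebraMap_eq_smul_one,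
        Algebra.algebraMap_eq_smul_one, smul_mul_assoc, smul_mul_assoc, one_mul, one_mul,
        Matrix.mul_smul, Matrix.smul_mul, hpow k]
  -- q(J(q,m))^m = 0
  have hAB_q : Commute ((1 : Matrix (Fin m) (Fin m) F) ⊗ₖ companionMatrix q)
      ((jordanShift F m) ⊗ₖ (1 : Matrix (Fin q.natDegree) (Fin q.natDegree) F)) := by
    unfold Commute SemiconjBy
    rw [← Matrix.mul_kronecker_mul, ← Matrix.mul_kronecker_mul, one_mul, mul_one,
      one_mul, mul_one]
  have hqJq : aeval Jq (q ^ m) = 0 := by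
    obtain ⟨c, hc, hu, hv⟩ := exists_aeval_add_commute _ _ hAB_q q
    have hA : (1 : Matrix (Fin m) (Fin m) F) ⊗ₖ companionMatrix q
        = kronAlgHom F m q.natDegree (companionMatrix q) := rfl
    have : aeval Jq q = (jordanShift F m ⊗ₖ 1) * c := by
      rw [hJq, genJordan, hc, hA, Polynomial.aeval_algHom_apply,
        aeval_companion q hqm, map_zero, zero_add]
    rw [map_pow, this, hv.mul_pow, shift_kron_pow, jordanShift_pow_self,
      Matrix.zero_kronecker, zero_mul]
  -- q(J(p,n))^m is a unit
  have hAB_p : Commute ((1 : Matrix (Fin n) (Fin n) F) ⊗ₖ companionMatrix p)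
      ((jordanShift F n) ⊗ₖ (1 : Matrix (Fin p.natDegree) (Fin p.natDegree) F)) := by
    unfold Commute SemiconjBy
    rw [← Matrix.mul_kronecker_mul, ← Matrix.mul_kronecker_mul, one_mul, mul_one,
      one_mul, mul_one]
  have hunit : IsUnit (aeval Jp (q ^ m)) := by
    obtain ⟨c, hc, hu, hv⟩ := exists_aeval_add_commute _ _ hAB_p q
    set A := (1 : Matrix (Fin n) (Fin n) F) ⊗ₖ companionMatrix p with hA
    set B := (jordanShift F n) ⊗ₖ (1 : Matrix (Fin p.natDegree) (Fin p.natDegree) F) with hB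
    have hAk : A = kronAlgHom F n p.natDegree (companionMatrix p) := rfl
    have hUnitA : IsUnit (aeval A q) := by
      rw [hAk, Polynomial.aeval_algHom_apply]
      exact (isUnit_aeval_companion hpm hqm hpi hqi hne).map
        ((kronAlgHom F n p.natDegree).toRingHom)
    have hNil : IsNilpotent (B * c) := by
      refine ⟨n, ?_⟩
      rw [hv.mul_pow, hB, shift_kron_pow, jordanShift_pow_self,
        Matrix.zero_kronecker, zero_mul]
    have hcomm : Commute (B * c) (aeval A q) := by
      have h1 : Commute B (aeval A q) := commute_aeval_of_commute hAB_p.symm q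
      have h2 : Commute c (aeval A q) := commute_aeval_of_commute hu.symm q
      exact h1.mul_left h2
    have : IsUnit (aeval Jp q) := by
      rw [hJp, genJordan, hc]
      exact hNil.isUnit_add_left_of_commute hUnitA hcomm
    rw [map_pow]
    exact this.pow m
  -- conclude
  have h0 : aeval Jp (q ^ m) * Δ = 0 := by
    rw [← hint, hqJq, Matrix.mul_zero]
  obtain ⟨u, hu⟩ := hunit
  calc Δ = ((u⁻¹ : (Matrix (Fin n × Fin p.natDegree) (Fin n × Fin p.natDegree) F)ˣ)
          : Matrix (Fin n × Fin p.natDegree) (Fin n × Fin p.natDegree) F) * ((u : Matrix (Fin n × Fin p.natDegree) (Fin n × Fin p.natDegree) F) * Δ) := by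
        rw [← Matrix.mul_assoc, Units.inv_mul, Matrix.one_mul]
    _ = 0 := by rw [hu, h0, Matrix.mul_zero]
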